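/- ∑_{n=1}^∞ 1/(2^n − 1) = ∑_{k=1}^∞ 2^{-k^2} + 2·∑_{j=1}^∞ ∑_{k=1}^∞ 2^{-(k^2 + jk)}. -/

import Mathlib

open Set Function

theorem erdos_borwein_theta_representation :
    ∑' n : ℕ, (1 : ℝ) / (2 ^ (n + 1) - 1) =
      (∑' k : ℕ, (1 : ℝ) / 2 ^ ((k + 1) ^ 2)) +
      2 * ∑' j : ℕ, ∑' k : ℕ, (1 : ℝ) / 2 ^ ((k + 1) ^ 2 + (j + 1) * (k + 1)) := by
  set f : ℕ × ℕ → ℝ := fun p => (1 : ℝ) / 2 ^ ((p.1 + 1) * (p.2 + 1)) with hf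
  -- summability of f
  have hS : Summable f := by
    have hg : Summable (fun p : ℕ × ℕ => ((1:ℝ)/2) ^ p.1 * ((1:ℝ)/2) ^ p.2) :=
      summable_geometric_two.mul_of_nonneg summable_geometric_two
        (fun n => by positivity) (fun n => by positivity)
    refine hg.of_nonneg_of_le (fun p => by positivity) (fun p => ?_)
    have h1 : ((1:ℝ)/2) ^ p.1 * ((1:ℝ)/2) ^ p.2 = ((1:ℝ)/2) ^ (p.1 + p.2) := (pow_add _ _ _).symm
    have h2 : f p = ((1:ℝ)/2) ^ ((p.1 + 1) * (p.2 + 1)) := by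
      simp [hf, div_pow, one_pow]
    rw [h1, h2]
    apply pow_le_pow_of_le_one (by norm_num) (by norm_num)
    nlinarith [p.1.le_refl, p.2.le_refl]
  -- row sums: geometric series
  have hrow : ∀ n : ℕ, HasSum (fun m : ℕ => f (n, m)) ((1 : ℝ) / (2 ^ (n + 1) - 1)) := by
    intro n
    set r : ℝ := ((1:ℝ)/2) ^ (n + 1) with hr
    have hr0 : 0 ≤ r := by positivity
    have hr1 : r < 1 := by
      rw [hr]
      exact pow_lt_one₀ (by norm_num) (by norm_num) (Nat.succ_ne_zero n)
    have h := (hasSum_geometric_of_lt_one hr0 hr1).mul_left r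
    have hfun : (fun m : ℕ => r * r ^ m) = fun m : ℕ => f (n, m) := by
      funext m
      simp only [hf, hr, ← pow_succ', ← pow_mul]
      rw [div_pow, one_pow]
      ring_nf
      simp only [one_div]
    rw [hfun] at h
    convert h using 1
    · rfl
    have h2 : (2:ℝ) ^ (n+1) ≠ 0 := by positivity
    rw [hr, div_pow, one_pow, inv_eq_one_div, div_mul_div_comm, one_mul]
    have h1 : (1:ℝ) < 2 ^ (n+1) := one_lt_pow₀ (by norm_num) (Nat.succ_ne_zero n)
    have hd : (0:ℝ) < 1 - 1/2^(n+1) := by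
      rw [sub_pos, div_lt_one (by positivity)]; exact h1
    rw [div_eq_div_iff (sub_pos.mpr h1).ne' (mul_pos (by positivity) hd).ne']
    field_simp
  -- hence LHS = total sum of f
  have hL : HasSum (fun n : ℕ => (1 : ℝ) / (2 ^ (n + 1) - 1)) (∑' p, f p) :=
    hS.hasSum.prod_fiberwise hrow
  -- the three pieces
  set D : ℝ := ∑' k : ℕ, (1 : ℝ) / 2 ^ ((k + 1) ^ 2) with hD
  set O : ℝ := ∑' j : ℕ, ∑' k : ℕ, (1 : ℝ) / 2 ^ ((k + 1) ^ 2 + (j + 1) * (k + 1)) with hO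
  set g1 : ℕ → ℕ × ℕ := fun k => (k, k) with hg1
  set g2 : ℕ × ℕ → ℕ × ℕ := fun p => (p.2, p.2 + p.1 + 1) with hg2
  set g3 : ℕ × ℕ → ℕ × ℕ := fun p => (p.2 + p.1 + 1, p.2) with hg3
  have hinj1 : Injective g1 := fun a b h => (Prod.ext_iff.1 h).1
  have hinj2 : Injective g2 := by
    intro a b h
    simp only [hg2, Prod.mk.injEq] at h
    obtain ⟨h1, h2⟩ := h
    exact Prod.ext (by omega) (by omega)
  have hinj3 : Injective g3 := by
    intro a b h
    simp only [hg3, Prod.mk.injEq] at h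
    obtain ⟨h1, h2⟩ := h
    exact Prod.ext (by omega) (by omega)
  -- diagonal sum
  have hfd : (f ∘ g1) = fun k : ℕ => (1 : ℝ) / 2 ^ ((k + 1) ^ 2) := by
    funext k; simp [hf, hg1, pow_two]
  have hDsum : HasSum (f ∘ g1) D := by
    have hs1 : Summable (f ∘ g1) := hS.comp_injective hinj1
    rw [hD, ← hfd]
    exact hs1.hasSum
  have hf2 : (f ∘ g2) = fun p : ℕ × ℕ => (1 : ℝ) / 2 ^ ((p.2 + 1) ^ 2 + (p.1 + 1) * (p.2 + 1)) := by
    funext p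
    simp only [hf, hg2, comp_apply]
    congr 1
    ring
  have hf3 : (f ∘ g3) = (f ∘ g2) := by
    funext p
    simp only [hf, hg2, hg3, comp_apply]
    congr 1
    ring
  have hS2 : Summable (f ∘ g2) := hS.comp_injective hinj2
  have hrow2 : ∀ j : ℕ, HasSum (fun k : ℕ => (f ∘ g2) (j, k))
      (∑' k : ℕ, (1 : ℝ) / 2 ^ ((k + 1) ^ 2 + (j + 1) * (k + 1))) := by
    intro j
    have hsum := hS2.prod_factor j
    have he : (fun k : ℕ => (f ∘ g2) (j, k)) =
        fun k : ℕ => (1 : ℝ) / 2 ^ ((k + 1) ^ 2 + (j + 1) * (k + 1)) := by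
      funext k; rw [hf2]
    rw [he] at hsum ⊢
    exact hsum.hasSum
  have hOsum : HasSum (f ∘ g2) O := by
    have h := hS2.hasSum.prod_fiberwise hrow2
    rw [hO, h.tsum_eq]
    exact hS2.hasSum
  have hOsum3 : HasSum (f ∘ g3) O := by rw [hf3]; exact hOsum
  -- set characterizations
  have hr1 : Set.range g1 = {p : ℕ × ℕ | p.1 = p.2} := by
    ext ⟨a, b⟩
    simp only [Set.mem_range, Set.mem_setOf_eq, hg1, Prod.ext_iff]
    constructor
    · rintro ⟨k, rfl, rfl⟩; rfl
    · rintro rfl; exact ⟨a, rfl, rfl⟩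
  have hr2 : Set.range g2 = {p : ℕ × ℕ | p.1 < p.2} := by
    ext ⟨a, b⟩
    simp only [Set.mem_range, Set.mem_setOf_eq, hg2, Prod.ext_iff]
    constructor
    · rintro ⟨⟨j, k⟩, h1, h2⟩; omega
    · intro h; exact ⟨(b - a - 1, a), rfl, by omega⟩
  have hr3 : Set.range g3 = {p : ℕ × ℕ | p.2 < p.1} := by
    ext ⟨a, b⟩
    simp only [Set.mem_range, Set.mem_setOf_eq, hg3, Prod.ext_iff]
    constructor
    · rintro ⟨⟨j, k⟩, h1, h2⟩; omega
    · intro h; exact ⟨(a - b - 1, b), by omega, rfl⟩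
  -- combine
  have hdisj : Disjoint (Set.range g2) (Set.range g3) := by
    rw [hr2, hr3, Set.disjoint_left]
    intro p h1 h2
    simp only [Set.mem_setOf_eq] at h1 h2
    omega
  have hcompl : Set.range g2 ∪ Set.range g3 = (Set.range g1)ᶜ := by
    rw [hr1, hr2, hr3]
    ext p
    simp only [Set.mem_union, Set.mem_setOf_eq, Set.mem_compl_iff]
    omega
  have hDs : HasSum (f ∘ ((↑) : Set.range g1 → ℕ × ℕ)) D :=
    hinj1.hasSum_range_iff.mpr hDsum
  have hO2s : HasSum (f ∘ ((↑) : Set.range g2 → ℕ × ℕ)) O :=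
    hinj2.hasSum_range_iff.mpr hOsum
  have hO3s : HasSum (f ∘ ((↑) : Set.range g3 → ℕ × ℕ)) O :=
    hinj3.hasSum_range_iff.mpr hOsum3
  have hUnion : HasSum (f ∘ ((↑) : ((Set.range g1)ᶜ : Set (ℕ × ℕ)) → ℕ × ℕ)) (O + O) := by
    rw [← hcompl]
    exact hO2s.add_disjoint hdisj hO3s
  have htotal : HasSum f (D + (O + O)) := hDs.add_compl hUnion
  rw [hL.tsum_eq, htotal.tsum_eq]
  ring
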